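/- Let N₁, N₂ be independent standard normal random variables, let ρ ∈ (−1, 1), and set X = √(1−ρ²)·N₁ + ρ·N₂ and Y = N₂, so (X,Y) is bivariate normal with standard normal marginals and correlation ρ. Let Φ be the standard normal distribution function, b(t) = (1/(1−Φ))^←(t) (left-continuous inverse) and a(t) = 1/√(2 log t) for t > 1. Then for every x ∈ ℝ and y ∈ ℝ, t·P[X − ρ·b(t) ≤ x, (Y − b(t))/a(t) > y] → Φ(x/√(1−ρ²))·e^{−y} as t → ∞. -/

import Mathlib

open MeasureTheory ProbabilityTheory Filter

/-- The standard normal distribution function. -/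
noncomputable def stdNormalCDF (x : ℝ) : ℝ :=
  ∫ t in Set.Iic x, Real.exp (-(t ^ 2) / 2) / Real.sqrt (2 * Real.pi)

namespace SN

noncomputable def sg (t : ℝ) : ℝ := Real.exp (-(t ^ 2) / 2) / Real.sqrt (2 * Real.pi)

lemma sqrt_two_pi_pos : 0 < Real.sqrt (2 * Real.pi) :=
  Real.sqrt_pos.2 (by positivity)

lemma sg_pos (t : ℝ) : 0 < sg t := div_pos (Real.exp_pos _) sqrt_two_pi_pos

lemma sg_eq : sg = fun t => Real.exp (-(1/2) * t ^ 2) * (Real.sqrt (2 * Real.pi))⁻¹ := by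
  funext t
  rw [sg, div_eq_mul_inv]
  congr 2
  ring

lemma sg_cont : Continuous sg := by
  rw [sg_eq]; continuity

lemma sg_integrable : Integrable sg := by
  rw [sg_eq]
  exact (integrable_exp_neg_mul_sq (by norm_num)).mul_const _

lemma sg_integral : ∫ t, sg t = 1 := by
  rw [sg_eq]
  beta_reduce; rw [MeasureTheory.integral_mul_const, integral_gaussian]
  rw [show Real.pi / (1/2) = 2 * Real.pi by ring]
  exact mul_inv_cancel₀ (ne_of_gt sqrt_two_pi_pos)

lemma Phi_eq (x : ℝ) : stdNormalCDF x = ∫ t in Set.Iic x, sg t := rfl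

lemma Phi_add_tail (x : ℝ) : stdNormalCDF x + ∫ t in Set.Ioi x, sg t = 1 := by
  have h := MeasureTheory.setIntegral_union (μ := volume) (f := sg)
    (Set.Iic_disjoint_Ioi (le_refl x)) measurableSet_Ioi
    sg_integrable.integrableOn sg_integrable.integrableOn
  rw [Set.Iic_union_Ioi, MeasureTheory.setIntegral_univ, sg_integral] at h
  rw [Phi_eq]
  linarith

lemma tail_eq (x : ℝ) : 1 - stdNormalCDF x = ∫ t in Set.Ioi x, sg t := by
  linarith [Phi_add_tail x]

lemma tail_pos (x : ℝ) : 0 < 1 - stdNormalCDF x := by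
  rw [tail_eq]
  rw [MeasureTheory.setIntegral_pos_iff_support_of_nonneg_ae
    (Filter.Eventually.of_forall fun t => (sg_pos t).le) sg_integrable.integrableOn]
  have : Function.support sg = Set.univ := by
    ext t; simp [Function.mem_support, (sg_pos t).ne']
  rw [this, Set.univ_inter]
  simp

lemma Phi_lt_one (x : ℝ) : stdNormalCDF x < 1 := by linarith [tail_pos x]

lemma Phi_pos (x : ℝ) : 0 < stdNormalCDF x := by
  rw [Phi_eq]
  rw [MeasureTheory.setIntegral_pos_iff_support_of_nonneg_ae
    (Filter.Eventually.of_forall fun t => (sg_pos t).le) sg_integrable.integrableOn]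
  have : Function.support sg = Set.univ := by
    ext t; simp [Function.mem_support, (sg_pos t).ne']
  rw [this, Set.univ_inter]
  simp

lemma Phi_strictMono : StrictMono stdNormalCDF := by
  intro u v huv
  have h : stdNormalCDF u + ∫ t in Set.Ioc u v, sg t = stdNormalCDF v := by
    rw [Phi_eq, Phi_eq, ← Set.Iic_union_Ioc_eq_Iic huv.le]
    exact (MeasureTheory.setIntegral_union (Set.Iic_disjoint_Ioc le_rfl) measurableSet_Ioc
      sg_integrable.integrableOn sg_integrable.integrableOn).symm
  have hpos : 0 < ∫ t in Set.Ioc u v, sg t := by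
    rw [MeasureTheory.setIntegral_pos_iff_support_of_nonneg_ae
      (Filter.Eventually.of_forall fun t => (sg_pos t).le) sg_integrable.integrableOn]
    have : Function.support sg = Set.univ := by
      ext t; simp [Function.mem_support, (sg_pos t).ne']
    rw [this, Set.univ_inter, Real.volume_Ioc]
    simp [huv]
  linarith

lemma Phi_continuous : Continuous stdNormalCDF := by
  have h : ∀ x : ℝ, stdNormalCDF x = stdNormalCDF 0 + ∫ t in (0:ℝ)..x, sg t := by
    intro x
    have := intervalIntegral.integral_Iic_sub_Iic (f := sg) (μ := volume)
      sg_integrable.integrableOn sg_integrable.integrableOn (a := 0) (b := x)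
    rw [Phi_eq, Phi_eq] at *
    linarith [this]
  have : stdNormalCDF = fun x => stdNormalCDF 0 + ∫ t in (0:ℝ)..x, sg t := funext h
  rw [this]
  exact continuous_const.add (intervalIntegral.continuous_primitive
    (fun a b => sg_integrable.intervalIntegrable) 0)

end SN

namespace SN

lemma hasDerivAt_sg (t : ℝ) : HasDerivAt sg (-t * sg t) t := by
  have h1 : HasDerivAt (fun t : ℝ => -(t ^ 2) / 2) (-t) t := by
    have := ((hasDerivAt_pow 2 t).neg).div_const 2
    refine this.congr_deriv ?_
    simp
    ring
  have h2 := (h1.exp).div_const (Real.sqrt (2 * Real.pi))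
  refine h2.congr_deriv ?_
  rw [sg]
  ring

lemma tendsto_sg_atTop : Filter.Tendsto sg Filter.atTop (nhds 0) := by
  have h1 : Filter.Tendsto (fun t : ℝ => -(t ^ 2) / 2) Filter.atTop Filter.atBot := by
    apply Filter.Tendsto.atBot_div_const (by norm_num)
    exact Filter.tendsto_neg_atBot_iff.2 (Filter.tendsto_pow_atTop (by norm_num))
  have h2 := Real.tendsto_exp_atBot.comp h1
  have := h2.div_const (Real.sqrt (2 * Real.pi))
  unfold sg; simpa only [Function.comp_def, zero_div] using this

lemma integrable_mul_sg : MeasureTheory.Integrable (fun t => t * sg t) := by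
  have := (integrable_mul_exp_neg_mul_sq (b := 1/2) (by norm_num)).mul_const
    (Real.sqrt (2 * Real.pi))⁻¹
  convert this using 2 with t
  rw [sg, div_eq_mul_inv]
  ring_nf

lemma integral_Ioi_mul_sg (v : ℝ) : ∫ t in Set.Ioi v, t * sg t = sg v := by
  have h := MeasureTheory.integral_Ioi_of_hasDerivAt_of_tendsto' (f := fun t => -sg t)
    (f' := fun t => t * sg t) (a := v) (m := 0)
    (fun x _ => (hasDerivAt_sg x).neg.congr_deriv (by ring))
    integrable_mul_sg.integrableOn
    (by simpa using tendsto_sg_atTop.neg)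
  rw [h]; ring

lemma mills_upper {v : ℝ} (hv : 0 < v) : 1 - stdNormalCDF v ≤ sg v / v := by
  rw [tail_eq]
  have hle : ∫ t in Set.Ioi v, sg t ≤ ∫ t in Set.Ioi v, (t / v) * sg t := by
    apply MeasureTheory.setIntegral_mono_on sg_integrable.integrableOn
      ((integrable_mul_sg.div_const v).congr ?_).integrableOn measurableSet_Ioi
    · intro t ht
      have h1 : (1:ℝ) ≤ t / v := (one_le_div hv).2 (le_of_lt ht)
      nlinarith [sg_pos t]
    · exact Filter.Eventually.of_forall fun t => by ring
  calc ∫ t in Set.Ioi v, sg t ≤ ∫ t in Set.Ioi v, (t / v) * sg t := hle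
    _ = (∫ t in Set.Ioi v, t * sg t) / v := by
        rw [← MeasureTheory.integral_div]
        congr 1; funext t; ring
    _ = sg v / v := by rw [integral_Ioi_mul_sg]

lemma hasDerivAt_q (t : ℝ) (ht : t ≠ 0) :
    HasDerivAt (fun t : ℝ => -((t ^ 2 - 1) / t ^ 3 * sg t)) ((1 - 3 / t ^ 4) * sg t) t := by
  have h1 : HasDerivAt (fun t : ℝ => (t ^ 2 - 1) / t ^ 3) ((3 - t ^ 2) / t ^ 4) t := by
    have := ((hasDerivAt_pow 2 t).sub_const 1).div (hasDerivAt_pow 3 t) (pow_ne_zero 3 ht)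
    refine this.congr_deriv ?_
    field_simp
    ring
  have h2 := (h1.mul (hasDerivAt_sg t)).neg
  refine h2.congr_deriv ?_
  have h4 : t ^ 4 ≠ 0 := pow_ne_zero 4 ht
  field_simp
  ring

lemma tendsto_q_atTop :
    Filter.Tendsto (fun t : ℝ => -((t ^ 2 - 1) / t ^ 3 * sg t)) Filter.atTop (nhds 0) := by
  rw [show (0:ℝ) = -0 by simp]
  apply Filter.Tendsto.neg
  apply squeeze_zero' (g := sg)
  · filter_upwards [Filter.eventually_ge_atTop (1:ℝ)] with t ht
    have := sg_pos t
    have h3 : (0:ℝ) < t ^ 3 := by positivity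
    have : (0:ℝ) ≤ (t ^ 2 - 1) / t ^ 3 := by
      apply div_nonneg _ h3.le; nlinarith
    positivity
  · filter_upwards [Filter.eventually_ge_atTop (1:ℝ)] with t ht
    have hs := sg_pos t
    have h3 : (0:ℝ) < t ^ 3 := by positivity
    have hle : (t ^ 2 - 1) / t ^ 3 ≤ 1 := by
      rw [div_le_one h3]; nlinarith
    nlinarith [div_nonneg (by nlinarith : (0:ℝ) ≤ t ^ 2 - 1) h3.le]
  · exact tendsto_sg_atTop

lemma integrable_q' {v : ℝ} (hv : 1 < v) :
    MeasureTheory.IntegrableOn (fun t : ℝ => (1 - 3 / t ^ 4) * sg t) (Set.Ioi v) := by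
  apply MeasureTheory.Integrable.mono' (g := fun t => 4 * sg t)
    ((sg_integrable.const_mul 4).integrableOn)
  · apply ContinuousOn.aestronglyMeasurable _ measurableSet_Ioi
    apply ContinuousOn.mul _ sg_cont.continuousOn
    apply ContinuousOn.sub continuousOn_const
    apply ContinuousOn.div continuousOn_const (continuous_pow 4).continuousOn
    intro t ht
    have : (1:ℝ) < t := lt_trans hv ht
    positivity
  · rw [MeasureTheory.ae_restrict_iff' measurableSet_Ioi]
    apply Filter.Eventually.of_forall
    intro t ht
    have h1 : (1:ℝ) < t := lt_trans hv ht
    have h4 : (1:ℝ) < t ^ 4 := by nlinarith [sq_nonneg t, sq_nonneg (t*t), sq_nonneg (t^2-1)]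
    have hs := sg_pos t
    have : |1 - 3 / t ^ 4| ≤ 4 := by
      rw [abs_le]
      constructor
      · have : 3 / t ^ 4 ≤ 3 := by
          rw [div_le_iff₀ (by positivity)]; nlinarith
        linarith
      · have : 0 ≤ 3 / t ^ 4 := by positivity
        linarith
    calc ‖(1 - 3 / t ^ 4) * sg t‖ = |1 - 3 / t ^ 4| * sg t := by
          rw [norm_mul, Real.norm_eq_abs, Real.norm_eq_abs, abs_of_pos hs]
      _ ≤ 4 * sg t := by nlinarith

lemma mills_lower {v : ℝ} (hv : 1 < v) : sg v * (v ^ 2 - 1) / v ^ 3 ≤ 1 - stdNormalCDF v := by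
  have hv0 : (0:ℝ) < v := lt_trans one_pos hv
  have h := MeasureTheory.integral_Ioi_of_hasDerivAt_of_tendsto'
    (f := fun t : ℝ => -((t ^ 2 - 1) / t ^ 3 * sg t))
    (f' := fun t : ℝ => (1 - 3 / t ^ 4) * sg t) (a := v) (m := 0)
    (fun x hx => hasDerivAt_q x (by
      have : (1:ℝ) < x := lt_of_lt_of_le hv hx
      positivity))
    (integrable_q' hv) tendsto_q_atTop
  have h2 : ∫ t in Set.Ioi v, (1 - 3 / t ^ 4) * sg t ≤ ∫ t in Set.Ioi v, sg t := by
    apply MeasureTheory.setIntegral_mono_on (integrable_q' hv)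
      sg_integrable.integrableOn measurableSet_Ioi
    intro t ht
    have h1 : (1:ℝ) < t := lt_trans hv ht
    have hs := sg_pos t
    have : (0:ℝ) ≤ 3 / t ^ 4 := by positivity
    nlinarith
  rw [tail_eq]
  rw [h] at h2
  calc sg v * (v ^ 2 - 1) / v ^ 3 = 0 - -((v ^ 2 - 1) / v ^ 3 * sg v) := by ring
    _ ≤ ∫ t in Set.Ioi v, sg t := h2

lemma tendsto_Phi_atTop : Filter.Tendsto stdNormalCDF Filter.atTop (nhds 1) := by
  have h : Filter.Tendsto (fun v => 1 - stdNormalCDF v) Filter.atTop (nhds 0) := by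
    apply squeeze_zero' (g := sg)
    · exact Filter.Eventually.of_forall fun v => (tail_pos v).le
    · filter_upwards [Filter.eventually_ge_atTop (1:ℝ)] with v hv
      calc 1 - stdNormalCDF v ≤ sg v / v := mills_upper (lt_of_lt_of_le one_pos hv)
        _ ≤ sg v := by
            rw [div_le_iff₀ (by linarith)]
            nlinarith [sg_pos v]
    · exact tendsto_sg_atTop
  have := (tendsto_const_nhds (x := (1:ℝ)) (f := Filter.atTop (α := ℝ))).sub h
  simpa using this

lemma Phi_symm (v : ℝ) : stdNormalCDF v = 1 - stdNormalCDF (-v) := by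
  rw [tail_eq, Phi_eq]
  have h : ∫ t in Set.Iic v, sg t = ∫ t in Set.Iic v, sg (-t) := by
    congr 1
    funext t
    rw [sg, sg]
    congr 2
    ring
  rw [h, integral_comp_neg_Iic]

lemma tendsto_Phi_atBot : Filter.Tendsto stdNormalCDF Filter.atBot (nhds 0) := by
  have h1 : Filter.Tendsto (fun v : ℝ => 1 - stdNormalCDF (-v)) Filter.atBot (nhds 0) := by
    have h2 : Filter.Tendsto (fun v : ℝ => stdNormalCDF (-v)) Filter.atBot (nhds 1) :=
      tendsto_Phi_atTop.comp tendsto_neg_atBot_atTop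
    have := (tendsto_const_nhds (x := (1:ℝ)) (f := Filter.atBot (α := ℝ))).sub h2
    simpa using this
  apply h1.congr
  intro v
  exact (Phi_symm v).symm

end SN

namespace SN

lemma exists_Phi_eq {s : ℝ} (h0 : 0 < s) (h1 : s < 1) : ∃ y, stdNormalCDF y = s := by
  obtain ⟨v₁, hv₁⟩ := (tendsto_Phi_atBot.eventually_lt_const h0).exists
  obtain ⟨v₂, hv₂⟩ := (tendsto_Phi_atTop.eventually_const_lt h1).exists
  have hv : v₁ ≤ v₂ := le_of_lt (Phi_strictMono.lt_iff_lt.1 (lt_trans hv₁ hv₂))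
  have := intermediate_value_Icc hv Phi_continuous.continuousOn
    (Set.mem_Icc.2 ⟨hv₁.le, hv₂.le⟩)
  obtain ⟨y, _, hy⟩ := this
  exact ⟨y, hy⟩

lemma b_prop (b : ℝ → ℝ) (hbdef : ∀ t : ℝ, b t = sInf {y : ℝ | t ≤ 1 / (1 - stdNormalCDF y)}) :
    ∀ t : ℝ, 1 < t → 1 - stdNormalCDF (b t) = 1 / t := by
  intro t ht
  have ht0 : (0:ℝ) < t := lt_trans one_pos ht
  have h0 : 0 < 1 - 1/t := by
    have : 1/t < 1 := by rw [div_lt_one ht0]; exact ht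
    linarith
  have h1 : 1 - 1/t < 1 := by
    have : (0:ℝ) < 1/t := by positivity
    linarith
  obtain ⟨y₀, hy₀⟩ := exists_Phi_eq h0 h1
  have hset : {y : ℝ | t ≤ 1 / (1 - stdNormalCDF y)} = Set.Ici y₀ := by
    ext y
    simp only [Set.mem_setOf_eq, Set.mem_Ici]
    have hty : 0 < 1 - stdNormalCDF y := tail_pos y
    constructor
    · intro h
      have h2 : t * (1 - stdNormalCDF y) ≤ 1 := by
        rw [le_div_iff₀ hty] at h; linarith
      have h3 : 1 - 1/t ≤ stdNormalCDF y := by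
        rw [← sub_nonneg] at *
        have : 1 - stdNormalCDF y ≤ 1/t := by
          rw [le_div_iff₀ ht0]; linarith
        linarith
      rw [← hy₀] at h3
      exact Phi_strictMono.le_iff_le.1 h3
    · intro h
      have h3 : 1 - 1/t ≤ stdNormalCDF y := hy₀ ▸ Phi_strictMono.le_iff_le.2 h
      rw [le_div_iff₀ hty]
      have : 1 - stdNormalCDF y ≤ 1/t := by linarith
      calc t * (1 - stdNormalCDF y) ≤ t * (1/t) := by
            exact mul_le_mul_of_nonneg_left this ht0.le
        _ = 1 := by field_simp
  rw [hbdef t, hset, csInf_Ici, hy₀]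
  ring

lemma tendsto_b_atTop (b : ℝ → ℝ)
    (hb : ∀ t : ℝ, 1 < t → 1 - stdNormalCDF (b t) = 1 / t) :
    Filter.Tendsto b Filter.atTop Filter.atTop := by
  rw [Filter.tendsto_atTop]
  intro K
  have hK : 0 < 1 - stdNormalCDF K := tail_pos K
  have h1 : ∀ᶠ t : ℝ in Filter.atTop, 1/t < 1 - stdNormalCDF K := by
    have h2 : Filter.Tendsto (fun t : ℝ => 1/t) Filter.atTop (nhds 0) := by
      simpa only [one_div] using tendsto_inv_atTop_zero
    exact h2.eventually_lt_const hK
  filter_upwards [h1, Filter.eventually_gt_atTop (1:ℝ)] with t h2 h3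
  have h4 : 1 - stdNormalCDF (b t) = 1/t := hb t h3
  have h5 : 1 - stdNormalCDF (b t) < 1 - stdNormalCDF K := by rw [h4]; exact h2
  have : stdNormalCDF K < stdNormalCDF (b t) := by linarith
  exact (Phi_strictMono.lt_iff_lt.1 this).le

end SN

namespace SN

noncomputable def R (v : ℝ) : ℝ := -Real.log (1 - stdNormalCDF v) / (v ^ 2 / 2)

lemma log_sg (v : ℝ) :
    Real.log (sg v) = -(v ^ 2) / 2 - Real.log (Real.sqrt (2 * Real.pi)) := by
  rw [sg, Real.log_div (Real.exp_ne_zero _) (ne_of_gt sqrt_two_pi_pos), Real.log_exp]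

lemma tendsto_sq_half_atTop : Filter.Tendsto (fun v : ℝ => v ^ 2 / 2) Filter.atTop Filter.atTop :=
  (Filter.tendsto_pow_atTop (by norm_num)).atTop_div_const (by norm_num)

lemma const_div_sq_tendsto (c : ℝ) :
    Filter.Tendsto (fun v : ℝ => c / (v ^ 2 / 2)) Filter.atTop (nhds 0) :=
  Filter.Tendsto.div_atTop tendsto_const_nhds tendsto_sq_half_atTop

lemma log_div_self_tendsto : Filter.Tendsto (fun v : ℝ => Real.log v / v) Filter.atTop (nhds 0) := by
  have := Real.tendsto_pow_log_div_mul_add_atTop 1 0 1 one_ne_zero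
  simpa using this

lemma log_div_sq_tendsto :
    Filter.Tendsto (fun v : ℝ => Real.log v / (v ^ 2 / 2)) Filter.atTop (nhds 0) := by
  have h1 : Filter.Tendsto (fun v : ℝ => (Real.log v / v) * (2 / v)) Filter.atTop (nhds 0) := by
    have h2 : Filter.Tendsto (fun v : ℝ => 2 / v) Filter.atTop (nhds 0) :=
      Filter.Tendsto.div_atTop tendsto_const_nhds Filter.tendsto_id
    simpa using log_div_self_tendsto.mul h2
  apply h1.congr'
  filter_upwards [Filter.eventually_gt_atTop (0:ℝ)] with v hv
  rw [div_mul_div_comm, div_eq_div_iff (by positivity) (by positivity)]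
  ring

lemma log_sq_sub_one_div_sq_tendsto :
    Filter.Tendsto (fun v : ℝ => Real.log (v ^ 2 - 1) / (v ^ 2 / 2)) Filter.atTop (nhds 0) := by
  have hcomp : Filter.Tendsto (fun v : ℝ => v ^ 2 - 1) Filter.atTop Filter.atTop :=
    (Filter.tendsto_pow_atTop (by norm_num)).atTop_add tendsto_const_nhds
  have h1 : Filter.Tendsto (fun v : ℝ => Real.log (v ^ 2 - 1) / (v ^ 2 - 1)) Filter.atTop (nhds 0) :=
    log_div_self_tendsto.comp hcomp
  have h2 : Filter.Tendsto (fun v : ℝ => (v ^ 2 - 1) / (v ^ 2 / 2)) Filter.atTop (nhds 2) := by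
    have h3 : Filter.Tendsto (fun v : ℝ => 2 - 1 / (v ^ 2 / 2)) Filter.atTop (nhds 2) := by
      have := (tendsto_const_nhds (x := (2:ℝ)) (f := Filter.atTop (α := ℝ))).sub
        (const_div_sq_tendsto 1)
      simpa using this
    apply h3.congr'
    filter_upwards [Filter.eventually_gt_atTop (0:ℝ)] with v hv
    have hne : v ^ 2 / 2 ≠ 0 := by positivity
    field_simp
  have := h1.mul h2
  rw [zero_mul] at this
  apply this.congr'
  filter_upwards [Filter.eventually_gt_atTop (2:ℝ)] with v hv
  have h4 : v ^ 2 - 1 ≠ 0 := by nlinarith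
  field_simp

lemma R_tendsto : Filter.Tendsto R Filter.atTop (nhds 1) := by
  set c0 := Real.log (Real.sqrt (2 * Real.pi)) with hc0
  have hL : Filter.Tendsto (fun v : ℝ => (v ^ 2 / 2 + c0 + Real.log v) / (v ^ 2 / 2))
      Filter.atTop (nhds 1) := by
    have h := ((tendsto_const_nhds (x := (1:ℝ)) (f := Filter.atTop (α := ℝ))).add
      (const_div_sq_tendsto c0)).add log_div_sq_tendsto
    rw [add_zero, add_zero] at h
    apply h.congr'
    filter_upwards [Filter.eventually_gt_atTop (0:ℝ)] with v hv
    have : v ^ 2 / 2 ≠ 0 := by positivity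
    field_simp
  have hU : Filter.Tendsto
      (fun v : ℝ => (v ^ 2 / 2 + c0 + 3 * Real.log v - Real.log (v ^ 2 - 1)) / (v ^ 2 / 2))
      Filter.atTop (nhds 1) := by
    have h3 : Filter.Tendsto (fun v : ℝ => 3 * Real.log v / (v ^ 2 / 2)) Filter.atTop (nhds 0) := by
      have := log_div_sq_tendsto.const_mul (3:ℝ)
      rw [mul_zero] at this
      apply this.congr
      intro v; ring
    have h := (((tendsto_const_nhds (x := (1:ℝ)) (f := Filter.atTop (α := ℝ))).add
      (const_div_sq_tendsto c0)).add h3).sub log_sq_sub_one_div_sq_tendsto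
    rw [add_zero, add_zero, sub_zero] at h
    apply h.congr'
    filter_upwards [Filter.eventually_gt_atTop (0:ℝ)] with v hv
    have : v ^ 2 / 2 ≠ 0 := by positivity
    field_simp
  apply tendsto_of_tendsto_of_tendsto_of_le_of_le' hL hU
  · -- lower bound: (v²/2 + c0 + log v)/(v²/2) ≤ R v
    filter_upwards [Filter.eventually_gt_atTop (2:ℝ)] with v hv
    have hv0 : (0:ℝ) < v := by linarith
    have hv1 : (1:ℝ) < v := by linarith
    have hsq : (0:ℝ) < v ^ 2 / 2 := by positivity
    have htp := tail_pos v
    have hub := mills_upper hv0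
    have hlog : Real.log (1 - stdNormalCDF v) ≤ Real.log (sg v / v) :=
      Real.log_le_log htp hub
    have hlogsv : Real.log (sg v / v) = -(v ^ 2) / 2 - c0 - Real.log v := by
      rw [Real.log_div (ne_of_gt (sg_pos v)) (ne_of_gt hv0), log_sg]
    rw [R]
    rw [div_le_div_iff₀ hsq hsq] -- careful: same denominator
    nlinarith [hlog, hlogsv]
  · -- upper bound
    filter_upwards [Filter.eventually_gt_atTop (2:ℝ)] with v hv
    have hv0 : (0:ℝ) < v := by linarith
    have hv1 : (1:ℝ) < v := by linarith
    have hsq : (0:ℝ) < v ^ 2 / 2 := by positivity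
    have hlb := mills_lower hv1
    have h1 : (0:ℝ) < v ^ 2 - 1 := by nlinarith
    have hq : (0:ℝ) < sg v * (v ^ 2 - 1) / v ^ 3 :=
      div_pos (mul_pos (sg_pos v) h1) (by positivity)
    have hlog : Real.log (sg v * (v ^ 2 - 1) / v ^ 3) ≤ Real.log (1 - stdNormalCDF v) :=
      Real.log_le_log hq hlb
    have hlogq : Real.log (sg v * (v ^ 2 - 1) / v ^ 3)
        = -(v ^ 2) / 2 - c0 + Real.log (v ^ 2 - 1) - 3 * Real.log v := by
      rw [Real.log_div (ne_of_gt (mul_pos (sg_pos v) h1)) (by positivity),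
        Real.log_mul (ne_of_gt (sg_pos v)) (ne_of_gt h1), Real.log_pow, log_sg]
      push_cast
      ring
    rw [R]
    rw [div_le_div_iff₀ hsq hsq]
    nlinarith [hlog, hlogq]

lemma R_pos (v : ℝ) : 0 < -Real.log (1 - stdNormalCDF v) := by
  have h1 : 1 - stdNormalCDF v < 1 := by linarith [Phi_pos v]
  have h2 : 0 < 1 - stdNormalCDF v := tail_pos v
  have := Real.log_neg h2 h1
  linarith

end SN

namespace SN

lemma tendsto_sqrt_atTop : Filter.Tendsto Real.sqrt Filter.atTop Filter.atTop := by
  rw [Filter.tendsto_atTop]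
  intro K
  filter_upwards [Filter.eventually_ge_atTop ((max K 0) ^ 2)] with t ht
  calc K ≤ max K 0 := le_max_left _ _
    _ = Real.sqrt ((max K 0) ^ 2) := (Real.sqrt_sq (le_max_right _ _)).symm
    _ ≤ Real.sqrt t := Real.sqrt_le_sqrt ht

lemma tendsto_sqrt_two_log : Filter.Tendsto (fun t : ℝ => Real.sqrt (2 * Real.log t))
    Filter.atTop Filter.atTop :=
  tendsto_sqrt_atTop.comp ((Real.tendsto_log_atTop).const_mul_atTop (by norm_num))

lemma tendsto_a_zero (a : ℝ → ℝ)
    (ha : ∀ t : ℝ, 1 < t → a t = 1 / Real.sqrt (2 * Real.log t)) :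
    Filter.Tendsto a Filter.atTop (nhds 0) := by
  have h1 : Filter.Tendsto (fun t : ℝ => (Real.sqrt (2 * Real.log t))⁻¹) Filter.atTop (nhds 0) :=
    tendsto_sqrt_two_log.inv_tendsto_atTop
  apply h1.congr'
  filter_upwards [Filter.eventually_gt_atTop (1:ℝ)] with t ht
  rw [ha t ht, one_div]

lemma a_pos (a : ℝ → ℝ)
    (ha : ∀ t : ℝ, 1 < t → a t = 1 / Real.sqrt (2 * Real.log t)) :
    ∀ᶠ t : ℝ in Filter.atTop, 0 < a t := by
  filter_upwards [Filter.eventually_gt_atTop (1:ℝ)] with t ht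
  rw [ha t ht]
  have : 0 < Real.log t := Real.log_pos ht
  positivity

lemma tendsto_ab_one (a b : ℝ → ℝ)
    (ha : ∀ t : ℝ, 1 < t → a t = 1 / Real.sqrt (2 * Real.log t))
    (hb : ∀ t : ℝ, 1 < t → 1 - stdNormalCDF (b t) = 1 / t) :
    Filter.Tendsto (fun t => b t * a t) Filter.atTop (nhds 1) := by
  have hbtop := tendsto_b_atTop b hb
  have hR : Filter.Tendsto (fun t => R (b t)) Filter.atTop (nhds 1) := R_tendsto.comp hbtop
  have hs : Filter.Tendsto (fun t => Real.sqrt (R (b t))) Filter.atTop (nhds 1) := by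
    have := (Real.continuous_sqrt.tendsto 1).comp hR
    simpa [Function.comp_def] using this
  have h2 : Filter.Tendsto (fun t => (Real.sqrt (R (b t)))⁻¹) Filter.atTop (nhds 1) := by
    have := hs.inv₀ (by norm_num)
    simpa using this
  apply h2.congr'
  filter_upwards [Filter.eventually_gt_atTop (1:ℝ),
    hbtop.eventually_gt_atTop 1] with t ht hbt
  -- show (√(R (b t)))⁻¹ = b t * a t
  have hv0 : (0:ℝ) < b t := lt_trans one_pos hbt
  have hRpos : 0 < R (b t) := div_pos (R_pos (b t)) (by positivity)
  have hlogt : Real.log t = -Real.log (1 - stdNormalCDF (b t)) := by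
    rw [hb t ht, one_div, Real.log_inv, neg_neg]
  have h2log : 2 * Real.log t = (b t) ^ 2 * R (b t) := by
    rw [hlogt, R]
    field_simp
  have hsq : Real.sqrt (2 * Real.log t) = b t * Real.sqrt (R (b t)) := by
    rw [h2log, Real.sqrt_mul (sq_nonneg _), Real.sqrt_sq hv0.le]
  rw [ha t ht, hsq]
  have hsR : 0 < Real.sqrt (R (b t)) := Real.sqrt_pos.2 hRpos
  field_simp

lemma sg_shift (u d : ℝ) : sg (u + d) = Real.exp (-(u * d + d ^ 2 / 2)) * sg u := by
  rw [sg, sg, ← mul_div_assoc, ← Real.exp_add]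
  congr 1
  ring

lemma tendsto_core (a b : ℝ → ℝ)
    (ha : ∀ t : ℝ, 1 < t → a t = 1 / Real.sqrt (2 * Real.log t))
    (hb : ∀ t : ℝ, 1 < t → 1 - stdNormalCDF (b t) = 1 / t) (z : ℝ) :
    Filter.Tendsto (fun t => t * (1 - stdNormalCDF (b t + a t * z))) Filter.atTop
      (nhds (Real.exp (-z))) := by
  have hbtop := tendsto_b_atTop b hb
  have hA := tendsto_a_zero a ha
  have hAB := tendsto_ab_one a b ha hb
  have hεz : Filter.Tendsto (fun t => a t * z) Filter.atTop (nhds 0) := by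
    have := hA.mul_const z
    simpa using this
  -- w → atTop
  have hw : Filter.Tendsto (fun t => b t + a t * z) Filter.atTop Filter.atTop := by
    apply Filter.tendsto_atTop_mono' _ _ (Filter.tendsto_atTop_add_const_right _ (-1 - |z|) hbtop)
    filter_upwards [hεz.eventually (Metric.ball_mem_nhds (0:ℝ) one_pos)] with t hεt
    rw [Real.dist_eq, sub_zero] at hεt
    have := abs_lt.1 hεt
    linarith [this.1, abs_nonneg z]
  have huez : Filter.Tendsto (fun t => b t * (a t * z)) Filter.atTop (nhds z) := by
    have := hAB.mul_const z
    rw [one_mul] at this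
    apply this.congr
    intro t; ring
  have hexp : Filter.Tendsto (fun t => Real.exp (-(b t * (a t * z) + (a t * z) ^ 2 / 2)))
      Filter.atTop (nhds (Real.exp (-z))) := by
    have hsq : Filter.Tendsto (fun t => (a t * z) ^ 2 / 2) Filter.atTop (nhds 0) := by
      have := (hεz.mul hεz).div_const 2
      rw [mul_zero, zero_div] at this
      apply this.congr
      intro t; ring
    have hin : Filter.Tendsto (fun t => -(b t * (a t * z) + (a t * z) ^ 2 / 2)) Filter.atTop
        (nhds (-z)) := by
      have := (huez.add hsq).neg
      rw [add_zero] at this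
      exact this
    exact (Real.continuous_exp.tendsto _).comp hin
  have hwinv : Filter.Tendsto (fun t => (b t + a t * z)⁻¹) Filter.atTop (nhds 0) :=
    hw.inv_tendsto_atTop
  have hfrac1 : Filter.Tendsto (fun t => b t / (b t + a t * z)) Filter.atTop (nhds 1) := by
    have h0 : Filter.Tendsto (fun t => (a t * z) * (b t + a t * z)⁻¹) Filter.atTop (nhds 0) := by
      have := hεz.mul hwinv
      simpa using this
    have h1 : Filter.Tendsto (fun t => 1 - (a t * z) * (b t + a t * z)⁻¹) Filter.atTop
        (nhds 1) := by
      have := (tendsto_const_nhds (x := (1:ℝ)) (f := Filter.atTop (α := ℝ))).sub h0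
      simpa using this
    apply h1.congr'
    filter_upwards [hw.eventually_gt_atTop 0] with t hwt
    field_simp
    ring
  have hfrac2 : Filter.Tendsto (fun t => (b t) ^ 2 / ((b t) ^ 2 - 1)) Filter.atTop (nhds 1) := by
    have hbsq : Filter.Tendsto (fun t => (b t) ^ 2 - 1) Filter.atTop Filter.atTop :=
      Filter.tendsto_atTop_add_const_right _ (-1) ((Filter.tendsto_pow_atTop two_ne_zero).comp hbtop)
    have h0 : Filter.Tendsto (fun t => 1 + ((b t) ^ 2 - 1)⁻¹) Filter.atTop (nhds 1) := by
      have := (tendsto_const_nhds (x := (1:ℝ)) (f := Filter.atTop (α := ℝ))).add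
        hbsq.inv_tendsto_atTop
      simpa using this
    apply h0.congr'
    filter_upwards [hbtop.eventually_gt_atTop 1] with t hbt
    have h2 : (b t) ^ 2 - 1 ≠ 0 := by nlinarith
    field_simp
    ring
  have hfrac3 : Filter.Tendsto (fun t => 1 - 1 / (b t + a t * z) ^ 2) Filter.atTop (nhds 1) := by
    have hwsq : Filter.Tendsto (fun t => (b t + a t * z) ^ 2) Filter.atTop Filter.atTop :=
      (Filter.tendsto_pow_atTop two_ne_zero).comp hw
    have h0 := (tendsto_const_nhds (x := (1:ℝ)) (f := Filter.atTop (α := ℝ))).sub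
      hwsq.inv_tendsto_atTop
    rw [sub_zero] at h0
    apply h0.congr
    intro t
    simp
  -- upper and lower bound functions
  have hFU : Filter.Tendsto (fun t => Real.exp (-(b t * (a t * z) + (a t * z) ^ 2 / 2)) *
      (b t / (b t + a t * z) * ((b t) ^ 2 / ((b t) ^ 2 - 1)))) Filter.atTop
      (nhds (Real.exp (-z))) := by
    have := hexp.mul (hfrac1.mul hfrac2)
    simpa using this
  have hFL : Filter.Tendsto (fun t => Real.exp (-(b t * (a t * z) + (a t * z) ^ 2 / 2)) *
      (b t / (b t + a t * z) * (1 - 1 / (b t + a t * z) ^ 2))) Filter.atTop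
      (nhds (Real.exp (-z))) := by
    have := hexp.mul (hfrac1.mul hfrac3)
    simpa using this
  apply tendsto_of_tendsto_of_tendsto_of_le_of_le' hFL hFU
  · -- FL ≤ t * (1 - Φ w)
    filter_upwards [Filter.eventually_gt_atTop (1:ℝ), hbtop.eventually_gt_atTop 1,
      hw.eventually_gt_atTop 1] with t ht hu1 hw1
    set u := b t with hu
    set d := a t * z with hd
    set w := u + d with hwdef
    have hu0 : (0:ℝ) < u := lt_trans one_pos hu1
    have hw0 : (0:ℝ) < w := lt_trans one_pos hw1
    have hDu : 0 < 1 - stdNormalCDF u := tail_pos u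
    have hDw : 0 < 1 - stdNormalCDF w := tail_pos w
    have htail : 1 - stdNormalCDF u = 1 / t := hb t ht
    have ht0 : (0:ℝ) < t := lt_trans one_pos ht
    have hteq : t * (1 - stdNormalCDF w) = (1 - stdNormalCDF w) / (1 - stdNormalCDF u) := by
      rw [htail]
      field_simp
    rw [hteq]
    have hratio : sg w * (w ^ 2 - 1) / w ^ 3 / (sg u / u)
        ≤ (1 - stdNormalCDF w) / (1 - stdNormalCDF u) :=
      div_le_div₀ hDw.le (mills_lower hw1) hDu (mills_upper hu0)
    refine le_trans (le_of_eq ?_) hratio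
    rw [hwdef, sg_shift u d]
    have hsgu := sg_pos u
    have hw3 : ((u + d) : ℝ) ^ 3 ≠ 0 := pow_ne_zero 3 (ne_of_gt hw0)
    have hwne : ((u + d) : ℝ) ≠ 0 := ne_of_gt hw0
    field_simp
  · -- t * (1 - Φ w) ≤ FU
    filter_upwards [Filter.eventually_gt_atTop (1:ℝ), hbtop.eventually_gt_atTop 1,
      hw.eventually_gt_atTop 1] with t ht hu1 hw1
    set u := b t with hu
    set d := a t * z with hd
    set w := u + d with hwdef
    have hu0 : (0:ℝ) < u := lt_trans one_pos hu1
    have hw0 : (0:ℝ) < w := lt_trans one_pos hw1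
    have hDu : 0 < 1 - stdNormalCDF u := tail_pos u
    have hDw : 0 < 1 - stdNormalCDF w := tail_pos w
    have htail : 1 - stdNormalCDF u = 1 / t := hb t ht
    have ht0 : (0:ℝ) < t := lt_trans one_pos ht
    have hteq : t * (1 - stdNormalCDF w) = (1 - stdNormalCDF w) / (1 - stdNormalCDF u) := by
      rw [htail]
      field_simp
    rw [hteq]
    have hu21 : (0:ℝ) < u ^ 2 - 1 := by nlinarith
    have hratio : (1 - stdNormalCDF w) / (1 - stdNormalCDF u)
        ≤ (sg w / w) / (sg u * (u ^ 2 - 1) / u ^ 3) :=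
      div_le_div₀ (div_pos (sg_pos w) hw0).le (mills_upper hw0)
        (div_pos (mul_pos (sg_pos u) hu21) (by positivity)) (mills_lower hu1)
    refine le_trans hratio (le_of_eq ?_)
    rw [hwdef, sg_shift u d]
    have hsgu := sg_pos u
    have hwne : ((u + d) : ℝ) ≠ 0 := ne_of_gt hw0
    field_simp

end SN

namespace SN

lemma bound_rho (ρ aa yy MM r : ℝ) (haa : 0 ≤ aa) (h1 : aa * yy ≤ r) (h2 : r ≤ aa * MM) :
    aa * min (ρ * yy) (ρ * MM) ≤ ρ * r ∧ ρ * r ≤ aa * max (ρ * yy) (ρ * MM) := by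
  rcases le_or_gt 0 ρ with hρ0 | hρ0
  · constructor
    · calc aa * min (ρ * yy) (ρ * MM) ≤ aa * (ρ * yy) :=
            mul_le_mul_of_nonneg_left (min_le_left _ _) haa
        _ = ρ * (aa * yy) := by ring
        _ ≤ ρ * r := mul_le_mul_of_nonneg_left h1 hρ0
    · calc ρ * r ≤ ρ * (aa * MM) := mul_le_mul_of_nonneg_left h2 hρ0
        _ = aa * (ρ * MM) := by ring
        _ ≤ aa * max (ρ * yy) (ρ * MM) := mul_le_mul_of_nonneg_left (le_max_right _ _) haa
  · constructor
    · calc aa * min (ρ * yy) (ρ * MM) ≤ aa * (ρ * MM) :=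
            mul_le_mul_of_nonneg_left (min_le_right _ _) haa
        _ = ρ * (aa * MM) := by ring
        _ ≤ ρ * r := mul_le_mul_of_nonpos_left h2 hρ0.le
    · calc ρ * r ≤ ρ * (aa * yy) := mul_le_mul_of_nonpos_left h1 hρ0.le
        _ = aa * (ρ * yy) := by ring
        _ ≤ aa * max (ρ * yy) (ρ * MM) := mul_le_mul_of_nonneg_left (le_max_left _ _) haa

lemma squeeze_double {F : ℝ → ℝ} {c : ℝ} {L U : ℝ → ℝ → ℝ} {l u : ℝ → ℝ}
    (hL : ∀ M : ℝ, Filter.Tendsto (L M) Filter.atTop (nhds (l M)))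
    (hU : ∀ M : ℝ, Filter.Tendsto (U M) Filter.atTop (nhds (u M)))
    (hLF : ∀ᶠ M : ℝ in Filter.atTop, ∀ᶠ t : ℝ in Filter.atTop, L M t ≤ F t)
    (hFU : ∀ᶠ M : ℝ in Filter.atTop, ∀ᶠ t : ℝ in Filter.atTop, F t ≤ U M t)
    (hl : Filter.Tendsto l Filter.atTop (nhds c))
    (hu : Filter.Tendsto u Filter.atTop (nhds c)) :
    Filter.Tendsto F Filter.atTop (nhds c) := by
  rw [Metric.tendsto_nhds]
  intro ε hε
  have hε3 : 0 < ε / 3 := by linarith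
  have h1 : ∀ᶠ M : ℝ in Filter.atTop, dist (l M) c < ε / 3 :=
    (Metric.tendsto_nhds.1 hl) _ hε3
  have h2 : ∀ᶠ M : ℝ in Filter.atTop, dist (u M) c < ε / 3 :=
    (Metric.tendsto_nhds.1 hu) _ hε3
  obtain ⟨M, hM1, hM2, hM3, hM4⟩ := (h1.and (h2.and (hLF.and hFU))).exists
  have h3 : ∀ᶠ t : ℝ in Filter.atTop, dist (L M t) (l M) < ε / 3 :=
    (Metric.tendsto_nhds.1 (hL M)) _ hε3
  have h4 : ∀ᶠ t : ℝ in Filter.atTop, dist (U M t) (u M) < ε / 3 :=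
    (Metric.tendsto_nhds.1 (hU M)) _ hε3
  filter_upwards [h3, h4, hM3, hM4] with t ht3 ht4 ht5 ht6
  rw [Real.dist_eq] at *
  rw [abs_lt] at *
  constructor
  · linarith [ht3.1, hM1.1, ht5]
  · linarith [ht4.2, hM2.2, ht6]

end SN

/-- Conditioned limit theorem for the bivariate normal: with `N₁ ⟂ N₂` standard
normal, `ρ ∈ (-1,1)`, `X = √(1-ρ²)N₁ + ρN₂`, `Y = N₂`, and the Gumbel norming
functions `a, b` for the standard normal, one has
`t·P[X - ρ b(t) ≤ x, (Y - b(t))/a(t) > y] → Φ(x/√(1-ρ²)) e^{-y}`. -/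
theorem stmt_19 {Ω : Type*} [MeasureSpace Ω] [IsProbabilityMeasure (ℙ : Measure Ω)]
    (N₁ N₂ : Ω → ℝ) (hN₁m : Measurable N₁) (hN₂m : Measurable N₂)
    (hindep : IndepFun N₁ N₂ ℙ)
    (hN₁ : ∀ x : ℝ, (ℙ {ω | N₁ ω ≤ x}).toReal = stdNormalCDF x)
    (hN₂ : ∀ x : ℝ, (ℙ {ω | N₂ ω ≤ x}).toReal = stdNormalCDF x)
    (ρ : ℝ) (hρ : ρ ∈ Set.Ioo (-1 : ℝ) 1)
    (X : Ω → ℝ) (hX : ∀ ω, X ω = Real.sqrt (1 - ρ ^ 2) * N₁ ω + ρ * N₂ ω)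
    (a b : ℝ → ℝ)
    (hb : ∀ t : ℝ, b t = sInf {y : ℝ | t ≤ 1 / (1 - stdNormalCDF y)})
    (ha : ∀ t : ℝ, 1 < t → a t = 1 / Real.sqrt (2 * Real.log t)) :
    ∀ x y : ℝ, Tendsto (fun t : ℝ =>
        t * (ℙ {ω | X ω - ρ * b t ≤ x ∧ y < (N₂ ω - b t) / a t}).toReal) atTop
      (nhds (stdNormalCDF (x / Real.sqrt (1 - ρ ^ 2)) * Real.exp (-y))) := by
  intro x y
  obtain ⟨hρ1, hρ2⟩ := hρ
  have hs : (0:ℝ) < 1 - ρ ^ 2 := by nlinarith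
  set c := Real.sqrt (1 - ρ ^ 2) with hcdef
  have hc : 0 < c := Real.sqrt_pos.2 hs
  have hb' : ∀ t : ℝ, 1 < t → 1 - stdNormalCDF (b t) = 1 / t := SN.b_prop b hb
  have hA0 := SN.tendsto_a_zero a ha
  have hcore := SN.tendsto_core a b ha hb'
  have hexpM : Tendsto (fun M : ℝ => Real.exp (-M)) atTop (nhds 0) :=
    Real.tendsto_exp_atBot.comp tendsto_neg_atTop_atBot
  refine SN.squeeze_double
    (L := fun M t => stdNormalCDF ((x - a t * max (ρ * y) (ρ * M)) / c) *
      (t * (1 - stdNormalCDF (b t + a t * y)) - t * (1 - stdNormalCDF (b t + a t * M))))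
    (U := fun M t => stdNormalCDF ((x - a t * min (ρ * y) (ρ * M)) / c) *
      (t * (1 - stdNormalCDF (b t + a t * y)) - t * (1 - stdNormalCDF (b t + a t * M)))
      + t * (1 - stdNormalCDF (b t + a t * M)))
    (l := fun M => stdNormalCDF (x / c) * (Real.exp (-y) - Real.exp (-M)))
    (u := fun M => stdNormalCDF (x / c) * (Real.exp (-y) - Real.exp (-M)) + Real.exp (-M))
    ?_ ?_ ?_ ?_ ?_ ?_
  · -- hL
    intro M
    have h1 : Tendsto (fun t => (x - a t * max (ρ * y) (ρ * M)) / c) atTop (nhds (x / c)) := by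
      have h2 := ((tendsto_const_nhds (x := x) (f := atTop (α := ℝ))).sub
        (hA0.mul_const (max (ρ * y) (ρ * M)))).div_const c
      simpa using h2
    exact ((SN.Phi_continuous.tendsto _).comp h1).mul ((hcore y).sub (hcore M))
  · -- hU
    intro M
    have h1 : Tendsto (fun t => (x - a t * min (ρ * y) (ρ * M)) / c) atTop (nhds (x / c)) := by
      have h2 := ((tendsto_const_nhds (x := x) (f := atTop (α := ℝ))).sub
        (hA0.mul_const (min (ρ * y) (ρ * M)))).div_const c
      simpa using h2
    exact (((SN.Phi_continuous.tendsto _).comp h1).mul ((hcore y).sub (hcore M))).add (hcore M)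
  · -- hLF : L M t ≤ F t
    filter_upwards [eventually_ge_atTop y] with M hMy
    filter_upwards [eventually_gt_atTop (1:ℝ), SN.a_pos a ha] with t ht hat
    have ht0 : (0:ℝ) < t := lt_trans one_pos ht
    set m₂ := max (ρ * y) (ρ * M) with hm2
    set q₂ := (x - a t * m₂) / c with hq2
    set A := N₁ ⁻¹' Set.Iic q₂ with hAdef
    set B := N₂ ⁻¹' Set.Ioc (b t + a t * y) (b t + a t * M) with hBdef
    have hincl : A ∩ B ⊆ {ω | X ω - ρ * b t ≤ x ∧ y < (N₂ ω - b t) / a t} := by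
      rintro ω ⟨hωA, hωB⟩
      rw [hAdef, Set.mem_preimage, Set.mem_Iic] at hωA
      rw [hBdef, Set.mem_preimage, Set.mem_Ioc] at hωB
      constructor
      · rw [hX ω]
        have h1 : N₁ ω * c ≤ x - a t * m₂ := by
          rw [hq2, le_div_iff₀ hc] at hωA
          exact hωA
        have hbnd := (SN.bound_rho ρ (a t) y M (N₂ ω - b t) hat.le
          (by linarith [hωB.1]) (by linarith [hωB.2])).2
        have hr : ρ * (N₂ ω - b t) = ρ * N₂ ω - ρ * b t := by ring
        have hcm : c * N₁ ω = N₁ ω * c := by ring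
        rw [← hm2] at hbnd
        linarith
      · rw [lt_div_iff₀ hat]
        have h2 : a t * y = y * a t := by ring
        linarith [hωB.1]
    have hPA : (ℙ A).toReal = stdNormalCDF q₂ := by
      rw [hAdef, show N₁ ⁻¹' Set.Iic q₂ = {ω | N₁ ω ≤ q₂} from rfl, hN₁]
    have hPB : (ℙ B).toReal
        = stdNormalCDF (b t + a t * M) - stdNormalCDF (b t + a t * y) := by
      have hle : b t + a t * y ≤ b t + a t * M := by
        have := mul_le_mul_of_nonneg_left hMy hat.le
        linarith
      have hsub : N₂ ⁻¹' Set.Iic (b t + a t * y) ⊆ N₂ ⁻¹' Set.Iic (b t + a t * M) :=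
        Set.preimage_mono (Set.Iic_subset_Iic.2 hle)
      have hBeq : B = N₂ ⁻¹' Set.Iic (b t + a t * M) \ N₂ ⁻¹' Set.Iic (b t + a t * y) := by
        rw [hBdef, ← Set.preimage_diff, Set.Iic_sdiff_Iic]
      rw [hBeq, measure_diff hsub (hN₂m measurableSet_Iic).nullMeasurableSet (measure_ne_top _ _),
        ENNReal.toReal_sub_of_le (measure_mono hsub) (measure_ne_top _ _),
        show N₂ ⁻¹' Set.Iic (b t + a t * M) = {ω | N₂ ω ≤ b t + a t * M} from rfl,
        show N₂ ⁻¹' Set.Iic (b t + a t * y) = {ω | N₂ ω ≤ b t + a t * y} from rfl,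
        hN₂, hN₂]
    have hprod : (ℙ (A ∩ B)).toReal
        = stdNormalCDF q₂ * (stdNormalCDF (b t + a t * M) - stdNormalCDF (b t + a t * y)) := by
      rw [hAdef, hBdef,
        hindep.measure_inter_preimage_eq_mul _ _ measurableSet_Iic measurableSet_Ioc,
        ENNReal.toReal_mul, ← hAdef, ← hBdef, hPA, hPB]
    have hmono : (ℙ (A ∩ B)).toReal
        ≤ (ℙ {ω | X ω - ρ * b t ≤ x ∧ y < (N₂ ω - b t) / a t}).toReal :=
      ENNReal.toReal_mono (measure_ne_top _ _) (measure_mono hincl)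
    rw [hprod] at hmono
    have h3 := mul_le_mul_of_nonneg_left hmono ht0.le
    refine le_trans (le_of_eq (by ring)) h3
  · -- hFU : F t ≤ U M t
    filter_upwards [eventually_ge_atTop y] with M hMy
    filter_upwards [eventually_gt_atTop (1:ℝ), SN.a_pos a ha] with t ht hat
    have ht0 : (0:ℝ) < t := lt_trans one_pos ht
    set m₁ := min (ρ * y) (ρ * M) with hm1
    set q₁ := (x - a t * m₁) / c with hq1
    set A := N₁ ⁻¹' Set.Iic q₁ with hAdef
    set B := N₂ ⁻¹' Set.Ioc (b t + a t * y) (b t + a t * M) with hBdef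
    set C := N₂ ⁻¹' Set.Ioi (b t + a t * M) with hCdef
    have hincl : {ω | X ω - ρ * b t ≤ x ∧ y < (N₂ ω - b t) / a t} ⊆ (A ∩ B) ∪ C := by
      rintro ω ⟨h1, h2⟩
      rw [hX ω] at h1
      rw [lt_div_iff₀ hat] at h2
      by_cases hcase : N₂ ω ≤ b t + a t * M
      · left
        constructor
        · rw [hAdef, Set.mem_preimage, Set.mem_Iic, hq1, le_div_iff₀ hc]
          have hbnd := (SN.bound_rho ρ (a t) y M (N₂ ω - b t) hat.le
            (by linarith) (by linarith)).1
          have hr : ρ * (N₂ ω - b t) = ρ * N₂ ω - ρ * b t := by ring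
          have hcm : c * N₁ ω = N₁ ω * c := by ring
          rw [← hm1] at hbnd
          linarith
        · rw [hBdef, Set.mem_preimage, Set.mem_Ioc]
          exact ⟨by linarith, hcase⟩
      · right
        rw [hCdef, Set.mem_preimage, Set.mem_Ioi]
        exact not_le.1 hcase
    have hPA : (ℙ A).toReal = stdNormalCDF q₁ := by
      rw [hAdef, show N₁ ⁻¹' Set.Iic q₁ = {ω | N₁ ω ≤ q₁} from rfl, hN₁]
    have hPB : (ℙ B).toReal
        = stdNormalCDF (b t + a t * M) - stdNormalCDF (b t + a t * y) := by
      have hle : b t + a t * y ≤ b t + a t * M := by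
        have := mul_le_mul_of_nonneg_left hMy hat.le
        linarith
      have hsub : N₂ ⁻¹' Set.Iic (b t + a t * y) ⊆ N₂ ⁻¹' Set.Iic (b t + a t * M) :=
        Set.preimage_mono (Set.Iic_subset_Iic.2 hle)
      have hBeq : B = N₂ ⁻¹' Set.Iic (b t + a t * M) \ N₂ ⁻¹' Set.Iic (b t + a t * y) := by
        rw [hBdef, ← Set.preimage_diff, Set.Iic_sdiff_Iic]
      rw [hBeq, measure_diff hsub (hN₂m measurableSet_Iic).nullMeasurableSet (measure_ne_top _ _),
        ENNReal.toReal_sub_of_le (measure_mono hsub) (measure_ne_top _ _),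
        show N₂ ⁻¹' Set.Iic (b t + a t * M) = {ω | N₂ ω ≤ b t + a t * M} from rfl,
        show N₂ ⁻¹' Set.Iic (b t + a t * y) = {ω | N₂ ω ≤ b t + a t * y} from rfl,
        hN₂, hN₂]
    have hPC : (ℙ C).toReal = 1 - stdNormalCDF (b t + a t * M) := by
      have hCeq : C = (N₂ ⁻¹' Set.Iic (b t + a t * M))ᶜ := by
        rw [hCdef, ← Set.preimage_compl, Set.compl_Iic]
      rw [hCeq, measure_compl (hN₂m measurableSet_Iic) (measure_ne_top _ _), measure_univ,
        ENNReal.toReal_sub_of_le prob_le_one (by simp),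
        ENNReal.toReal_one,
        show N₂ ⁻¹' Set.Iic (b t + a t * M) = {ω | N₂ ω ≤ b t + a t * M} from rfl, hN₂]
    have hprod : (ℙ (A ∩ B)).toReal
        = stdNormalCDF q₁ * (stdNormalCDF (b t + a t * M) - stdNormalCDF (b t + a t * y)) := by
      rw [hAdef, hBdef,
        hindep.measure_inter_preimage_eq_mul _ _ measurableSet_Iic measurableSet_Ioc,
        ENNReal.toReal_mul, ← hAdef, ← hBdef, hPA, hPB]
    have hmono : (ℙ {ω | X ω - ρ * b t ≤ x ∧ y < (N₂ ω - b t) / a t}).toReal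
        ≤ (ℙ (A ∩ B)).toReal + (ℙ C).toReal := by
      have hsplit := (measure_mono hincl).trans (measure_union_le (μ := (ℙ : Measure Ω)) (A ∩ B) C)
      have h4 := ENNReal.toReal_mono
        (ENNReal.add_ne_top.2 ⟨measure_ne_top _ _, measure_ne_top _ _⟩) hsplit
      rwa [ENNReal.toReal_add (measure_ne_top _ _) (measure_ne_top _ _)] at h4
    rw [hprod, hPC] at hmono
    have h3 := mul_le_mul_of_nonneg_left hmono ht0.le
    refine le_trans h3 (le_of_eq (by ring))
  · -- hl
    have h := ((tendsto_const_nhds (x := Real.exp (-y)) (f := atTop (α := ℝ))).sub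
      hexpM).const_mul (stdNormalCDF (x / c))
    simpa using h
  · -- hu
    have h := (((tendsto_const_nhds (x := Real.exp (-y)) (f := atTop (α := ℝ))).sub
      hexpM).const_mul (stdNormalCDF (x / c))).add hexpM
    simpa using h
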